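/- The eigenvalues of the preconditioned matrix A·Q₅⁻¹ belong to {1, (1+√3 i)/2, (1−√3 i)/2}, and J = 𝒜 Q₅⁻¹ satisfies (J − I)(J² − J + I) = 0. -/

import Mathlib

open Matrix Complex

/-- A 3×3 block matrix with blocks of sizes n, m, l. -/
def blk3 {n m l : ℕ}
    (M11 : Matrix (Fin n) (Fin n) ℝ) (M12 : Matrix (Fin n) (Fin m) ℝ) (M13 : Matrix (Fin n) (Fin l) ℝ)
    (M21 : Matrix (Fin m) (Fin n) ℝ) (M22 : Matrix (Fin m) (Fin m) ℝ) (M23 : Matrix (Fin m) (Fin l) ℝ)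
    (M31 : Matrix (Fin l) (Fin n) ℝ) (M32 : Matrix (Fin l) (Fin m) ℝ) (M33 : Matrix (Fin l) (Fin l) ℝ) :
    Matrix (Fin n ⊕ (Fin m ⊕ Fin l)) (Fin n ⊕ (Fin m ⊕ Fin l)) ℝ :=
  Matrix.fromBlocks M11
    (Matrix.of fun i j => Sum.elim (M12 i) (M13 i) j)
    (Matrix.of fun i j => Sum.elim (fun k => M21 k j) (fun k => M31 k j) i)
    (Matrix.fromBlocks M22 M23 M32 M33)

section blk3lemmas

variable {n m l : ℕ}
  {M11 N11 : Matrix (Fin n) (Fin n) ℝ} {M12 N12 : Matrix (Fin n) (Fin m) ℝ} {M13 N13 : Matrix (Fin n) (Fin l) ℝ}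
  {M21 N21 : Matrix (Fin m) (Fin n) ℝ} {M22 N22 : Matrix (Fin m) (Fin m) ℝ} {M23 N23 : Matrix (Fin m) (Fin l) ℝ}
  {M31 N31 : Matrix (Fin l) (Fin n) ℝ} {M32 N32 : Matrix (Fin l) (Fin m) ℝ} {M33 N33 : Matrix (Fin l) (Fin l) ℝ}

lemma blk3_mul :
    blk3 M11 M12 M13 M21 M22 M23 M31 M32 M33 * blk3 N11 N12 N13 N21 N22 N23 N31 N32 N33
    = blk3 (M11*N11 + M12*N21 + M13*N31) (M11*N12 + M12*N22 + M13*N32) (M11*N13 + M12*N23 + M13*N33)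
        (M21*N11 + M22*N21 + M23*N31) (M21*N12 + M22*N22 + M23*N32) (M21*N13 + M22*N23 + M23*N33)
        (M31*N11 + M32*N21 + M33*N31) (M31*N12 + M32*N22 + M33*N32) (M31*N13 + M32*N23 + M33*N33) := by
  ext i j
  rcases i with i | i | i <;> rcases j with j | j | j <;>
    (simp [blk3, Matrix.mul_apply, Matrix.fromBlocks, Matrix.add_apply,
      Fintype.sum_sum_type, Finset.sum_add_distrib]; try ring)

lemma blk3_add :
    blk3 M11 M12 M13 M21 M22 M23 M31 M32 M33 + blk3 N11 N12 N13 N21 N22 N23 N31 N32 N33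
    = blk3 (M11+N11) (M12+N12) (M13+N13) (M21+N21) (M22+N22) (M23+N23) (M31+N31) (M32+N32) (M33+N33) := by
  ext i j
  rcases i with i | i | i <;> rcases j with j | j | j <;>
    simp [blk3, Matrix.fromBlocks, Matrix.add_apply]

lemma blk3_one : (1 : Matrix (Fin n ⊕ (Fin m ⊕ Fin l)) (Fin n ⊕ (Fin m ⊕ Fin l)) ℝ)
    = blk3 1 0 0 0 1 0 0 0 1 := by
  ext i j
  rcases i with i | i | i <;> rcases j with j | j | j <;>
    simp [blk3, Matrix.fromBlocks, Matrix.one_apply, Sum.inl.injEq, Sum.inr.injEq]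

lemma blk3_zero : (0 : Matrix (Fin n ⊕ (Fin m ⊕ Fin l)) (Fin n ⊕ (Fin m ⊕ Fin l)) ℝ)
    = blk3 0 0 0 0 0 0 0 0 0 := by
  ext i j
  rcases i with i | i | i <;> rcases j with j | j | j <;>
    simp [blk3, Matrix.fromBlocks]

lemma blk3_congr (h11 : M11 = N11) (h12 : M12 = N12) (h13 : M13 = N13)
    (h21 : M21 = N21) (h22 : M22 = N22) (h23 : M23 = N23)
    (h31 : M31 = N31) (h32 : M32 = N32) (h33 : M33 = N33) :
    blk3 M11 M12 M13 M21 M22 M23 M31 M32 M33 = blk3 N11 N12 N13 N21 N22 N23 N31 N32 N33 := by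
  subst h11 h12 h13 h21 h22 h23 h31 h32 h33; rfl

end blk3lemmas

/-- `B * A * Bᵀ` is positive definite when `A` is and `B` has full row rank. -/
lemma posDef_mul_mul_transpose {m n : ℕ} {A : Matrix (Fin n) (Fin n) ℝ}
    (hA : A.PosDef) {B : Matrix (Fin m) (Fin n) ℝ} (hB : B.rank = m) :
    (B * A * Bᵀ).PosDef := by
  have hps : (B * A * Bᵀ).PosSemidef := by
    have := hA.posSemidef.mul_mul_conjTranspose_same B
    simpa using this
  refine Matrix.PosDef.of_dotProduct_mulVec_pos hps.isHermitian fun x hx => ?_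
  have hli : LinearIndependent ℝ (fun i => B i) := by
    rw [linearIndependent_iff_card_eq_finrank_span]
    rw [Matrix.rank_eq_finrank_span_row] at hB
    simp [Set.finrank, ← hB]; rfl
  have hinj : Function.Injective B.vecMul := Matrix.vecMul_injective_iff.mpr hli
  have hy : x ᵥ* B ≠ 0 := by
    intro h
    exact hx (hinj (by simpa using h))
  have key : star x ⬝ᵥ (B * A * Bᵀ) *ᵥ x = star (x ᵥ* B) ⬝ᵥ A *ᵥ (x ᵥ* B) := by
    simp only [star_trivial]
    rw [← Matrix.mulVec_mulVec, ← Matrix.mulVec_mulVec, Matrix.dotProduct_mulVec,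
      Matrix.mulVec_transpose]
  rw [key]
  exact hA.dotProduct_mulVec_pos hy

theorem stmt8 {n m l : ℕ} (A : Matrix (Fin n) (Fin n) ℝ) (B : Matrix (Fin m) (Fin n) ℝ)
    (C : Matrix (Fin l) (Fin m) ℝ) (hA : A.PosDef) (hB : B.rank = m) (hC : C.rank = l)
    (S : Matrix (Fin m) (Fin m) ℝ) (hS : S = B * A⁻¹ * Bᵀ)
    (X : Matrix (Fin l) (Fin l) ℝ) (hX : X = C * S⁻¹ * Cᵀ)
    (𝒜 Q₅ : Matrix (Fin n ⊕ (Fin m ⊕ Fin l)) (Fin n ⊕ (Fin m ⊕ Fin l)) ℝ)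
    (h𝒜 : 𝒜 = blk3 A Bᵀ 0 B 0 Cᵀ 0 C 0)
    (hQ : Q₅ = blk3 A Bᵀ 0 B 0 0 0 0 X)
    (J : Matrix (Fin n ⊕ (Fin m ⊕ Fin l)) (Fin n ⊕ (Fin m ⊕ Fin l)) ℝ)
    (hJ : J = 𝒜 * Q₅⁻¹) :
    (∀ μ ∈ spectrum ℂ (J.map Complex.ofReal),
      μ = 1 ∨ μ = (1 + (Real.sqrt 3 : ℂ) * Complex.I) / 2
        ∨ μ = (1 - (Real.sqrt 3 : ℂ) * Complex.I) / 2) ∧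
    (J - 1) * (J ^ 2 - J + 1) = 0 := by
  -- basic invertibility facts
  have hSpd : S.PosDef := hS ▸ posDef_mul_mul_transpose hA.inv hB
  have hXpd : X.PosDef := hX ▸ posDef_mul_mul_transpose hSpd.inv hC
  have hAd : IsUnit A.det := (Matrix.isUnit_iff_isUnit_det A).mp hA.isUnit
  have hSd : IsUnit S.det := (Matrix.isUnit_iff_isUnit_det S).mp hSpd.isUnit
  have hXd : IsUnit X.det := (Matrix.isUnit_iff_isUnit_det X).mp hXpd.isUnit
  have hA1 : A * A⁻¹ = 1 := Matrix.mul_nonsing_inv A hAd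
  have hA2 : A⁻¹ * A = 1 := Matrix.nonsing_inv_mul A hAd
  have hS1 : S * S⁻¹ = 1 := Matrix.mul_nonsing_inv S hSd
  have hS2 : S⁻¹ * S = 1 := Matrix.nonsing_inv_mul S hSd
  have hX1 : X * X⁻¹ = 1 := Matrix.mul_nonsing_inv X hXd
  have hX2 : X⁻¹ * X = 1 := Matrix.nonsing_inv_mul X hXd
  -- the explicit inverse of Q₅
  have hAc : ∀ (k : ℕ) (M : Matrix (Fin n) (Fin k) ℝ), A * (A⁻¹ * M) = M := fun k M => by
    rw [← Matrix.mul_assoc, hA1, Matrix.one_mul]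
  have hSc : ∀ (k : ℕ) (M : Matrix (Fin m) (Fin k) ℝ), S * (S⁻¹ * M) = M := fun k M => by
    rw [← Matrix.mul_assoc, hS1, Matrix.one_mul]
  have hBS : B * A⁻¹ * Bᵀ = S := hS.symm
  have hBSc : ∀ (k : ℕ) (M : Matrix (Fin m) (Fin k) ℝ), B * (A⁻¹ * (Bᵀ * M)) = S * M :=
    fun k M => by rw [← Matrix.mul_assoc, ← Matrix.mul_assoc, hBS]
  set P11 : Matrix (Fin n) (Fin n) ℝ := A⁻¹ - A⁻¹ * (Bᵀ * (S⁻¹ * (B * A⁻¹))) with hP11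
  set P12 : Matrix (Fin n) (Fin m) ℝ := A⁻¹ * (Bᵀ * S⁻¹) with hP12
  set P21 : Matrix (Fin m) (Fin n) ℝ := S⁻¹ * (B * A⁻¹) with hP21
  set P22 : Matrix (Fin m) (Fin m) ℝ := -S⁻¹ with hP22
  have hQP : Q₅ * blk3 P11 P12 0 P21 P22 0 0 0 X⁻¹ = 1 := by
    rw [hQ, blk3_mul, blk3_one]
    apply blk3_congr <;>
      simp [hP11, hP12, hP21, hP22, hA1, Matrix.mul_sub, Matrix.mul_assoc, hAc, hBSc, hSc, hS1, hX1,
        Matrix.mul_neg]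
  have hQinv : Q₅⁻¹ = blk3 P11 P12 0 P21 P22 0 0 0 X⁻¹ := Matrix.inv_eq_right_inv hQP
  -- the preconditioned matrix
  set T : Matrix (Fin l) (Fin m) ℝ := C * S⁻¹ with hT
  set U : Matrix (Fin m) (Fin l) ℝ := Cᵀ * X⁻¹ with hU
  set G : Matrix (Fin l) (Fin n) ℝ := C * (S⁻¹ * (B * A⁻¹)) with hG
  have hTU : T * U = 1 := by
    rw [hT, hU, ← Matrix.mul_assoc, Matrix.mul_assoc C, ← Matrix.mul_assoc, ← hX, hX1]
  have hTUc : ∀ (k : ℕ) (M : Matrix (Fin l) (Fin k) ℝ), T * (U * M) = M := fun k M => by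
    rw [← Matrix.mul_assoc, hTU, Matrix.one_mul]
  have hJb : J = blk3 1 0 0 0 1 U G (-T) 0 := by
    rw [hJ, hQinv, h𝒜, blk3_mul]
    apply blk3_congr <;>
      simp [hP11, hP12, hP21, hP22, hT, hU, hG, hA1, Matrix.mul_sub, Matrix.mul_assoc, hAc, hBSc, hSc,
        hS1, hX1, Matrix.mul_neg]
  set K : Matrix (Fin n ⊕ (Fin m ⊕ Fin l)) (Fin n ⊕ (Fin m ⊕ Fin l)) ℝ :=
    blk3 0 0 0 0 0 U G (-T) (-1) with hK
  have hJK : J = 1 + K := by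
    rw [hJb, hK, blk3_one, blk3_add]
    apply blk3_congr <;> simp
  have hK2 : K * K = blk3 0 0 0 (U*G) (-(U*T)) (-U) (-G) T 0 := by
    rw [hK, blk3_mul]
    apply blk3_congr <;> simp [Matrix.mul_assoc, Matrix.mul_neg, Matrix.neg_mul, hTU]
  have hK3 : K * (K * K) = blk3 0 0 0 (-(U*G)) (U*T) 0 0 0 1 := by
    rw [hK2, hK, blk3_mul]
    apply blk3_congr <;>
      simp [Matrix.mul_assoc, Matrix.mul_neg, Matrix.neg_mul, hTU, hTUc]
  have hKsum : K * (K * K) + K * K + K = 0 := by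
    rw [hK3, hK2, hK, blk3_add, blk3_add, blk3_zero]
    apply blk3_congr <;> simp
  have hid : (J - 1) * (J ^ 2 - J + 1) = 0 := by
    rw [hJK]
    calc (1 + K - 1) * ((1 + K) ^ 2 - (1 + K) + 1)
        = K * (K * K) + K * K + K := by noncomm_ring
      _ = 0 := hKsum
  refine ⟨?_, hid⟩
  -- spectrum part
  intro μ hμ
  set Jc := J.map Complex.ofReal with hJc
  have hmc : (Jc - 1) * (Jc ^ 2 - Jc + 1) = 0 := by
    have := congrArg (RingHom.mapMatrix (Complex.ofRealHom) :
      Matrix (Fin n ⊕ (Fin m ⊕ Fin l)) (Fin n ⊕ (Fin m ⊕ Fin l)) ℝ →+*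
      Matrix (Fin n ⊕ (Fin m ⊕ Fin l)) (Fin n ⊕ (Fin m ⊕ Fin l)) ℂ) hid
    simp [_root_.map_mul, _root_.map_sub, _root_.map_add, _root_.map_pow, RingHom.mapMatrix_apply, hJc] at this; exact this
  -- polynomial identity on the spectrum
  have hroot : (μ - 1) * (μ ^ 2 - μ + 1) = 0 := by
    classical
    set p : Polynomial ℂ := (Polynomial.X - 1) * (Polynomial.X ^ 2 - Polynomial.X + 1) with hp
    have haev : Polynomial.aeval Jc p = 0 := by
      rw [hp]; simp only [_root_.map_mul, _root_.map_sub, _root_.map_add, _root_.map_pow, Polynomial.aeval_X,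
        Polynomial.aeval_one]
      exact hmc
    have hmem : p.eval μ ∈ spectrum ℂ (Polynomial.aeval Jc p) :=
      spectrum.subset_polynomial_aeval Jc p ⟨μ, hμ, rfl⟩
    rw [haev] at hmem
    have h0 : p.eval μ = 0 := by
      by_contra h
      exact (spectrum.mem_iff.mp hmem)
        (by simpa using (IsUnit.map (algebraMap ℂ
          (Matrix (Fin n ⊕ (Fin m ⊕ Fin l)) (Fin n ⊕ (Fin m ⊕ Fin l)) ℂ)) (Ne.isUnit h)))
    rw [hp] at h0
    simpa using h0
  rcases mul_eq_zero.mp hroot with h1 | h2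
  · left; exact sub_eq_zero.mp h1
  · right
    have hs3 : ((Real.sqrt 3 : ℝ) : ℂ) ^ 2 = 3 := by
      rw [← Complex.ofReal_pow, Real.sq_sqrt (by norm_num : (0:ℝ) ≤ 3)]
      norm_num
    have hfac : (μ - (1 + (Real.sqrt 3 : ℂ) * Complex.I) / 2) *
        (μ - (1 - (Real.sqrt 3 : ℂ) * Complex.I) / 2) = 0 := by
      linear_combination h2 - (Complex.I ^ 2 / 4) * hs3 - (3/4) * Complex.I_sq
    rcases mul_eq_zero.mp hfac with h | h
    · left; exact sub_eq_zero.mp h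
    · right; exact sub_eq_zero.mp h
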